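/- arXiv:0906.5052 — 3 statements merged into one kernel-verified Lean document; each statement's English description precedes it below -/
import Mathlib

section
/- (Lemma 3.1.) Fix a cyclic permutation (α,β,γ) of (1,2,3) and define the bilinear maps N_α, N*_α : V×V → V by N_α(x,y) = −[ω_γ(x)+ω_β(J_αx)]·J_γy − [ω_β(x)−ω_γ(J_αx)]·J_βy + [ω_γ(y)+ω_β(J_αy)]·J_γx + [ω_β(y)−ω_γ(J_αy)]·J_βx and N*_α(x,y) = −[ω_γ(x)+ω_β(J_αx)]·J_γy − [ω_β(x)−ω_γ(J_αx)]·J_βy − [ω_γ(y)+ω_β(J_αy)]·J_γx − [ω_β(y)−ω_γ(J_αy)]·J_βx. Then N_α = 0 and N*_α = 0 if and only if ω_γ = −ω_β∘J_α. -/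
lemma auxlem {V : Type} [AddCommGroup V] [Module ℝ V] (hx0 : ∃ x : V, x ≠ 0)
    (Jα Jβ Jγ : V →ₗ[ℝ] V)
    (hαα : ∀ x, Jα (Jα x) = -x)
    (hγγ : ∀ x, Jγ (Jγ x) = -x)
    (hγα : ∀ x, Jγ (Jα x) = Jβ x)
    (hβα : ∀ x, Jβ (Jα x) = -Jγ x)
    (ωβ ωγ : V →ₗ[ℝ] ℝ) :
    (∀ x y, (-(ωγ x + ωβ (Jα x)) • Jγ y - (ωβ x - ωγ (Jα x)) • Jβ y + (ωγ y + ωβ (Jα y)) • Jγ x + (ωβ y - ωγ (Jα y)) • Jβ x) = 0 ∧ (-(ωγ x + ωβ (Jα x)) • Jγ y - (ωβ x - ωγ (Jα x)) • Jβ y - (ωγ y + ωβ (Jα y)) • Jγ x - (ωβ y - ωγ (Jα y)) • Jβ x) = 0) ↔ (∀ x, ωγ x = -ωβ (Jα x)) := by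
  constructor
  · intro h y
    obtain ⟨x, hx⟩ := hx0
    set a := ωγ y + ωβ (Jα y) with ha
    set b := ωβ y - ωγ (Jα y) with hb
    have E1 : a • Jγ x + b • Jβ x = 0 := by
      have h1 := (h x y).1
      have h2 := (h x y).2
      linear_combination (norm := module) ((2:ℝ)⁻¹) • (h1 - h2)
    have E2 : a • Jβ x - b • Jγ x = 0 := by
      have h1 := (h (Jα x) y).1
      have h2 := (h (Jα x) y).2
      rw [hγα x, hβα x] at h1 h2
      linear_combination (norm := module) ((2:ℝ)⁻¹) • (h1 - h2)
    have key : (a ^ 2 + b ^ 2) • Jγ x = 0 := by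
      linear_combination (norm := module) a • E1 - b • E2
    have hJx : Jγ x ≠ 0 := by
      intro hc
      apply hx
      have := hγγ x
      rw [hc, map_zero] at this
      simpa using this.symm
    rcases smul_eq_zero.mp key with hab | hc
    · have : a = 0 := by nlinarith [sq_nonneg a, sq_nonneg b]
      rw [ha] at this; linarith
    · exact absurd hc hJx
  · intro h x y
    have ha : ∀ z, ωγ z + ωβ (Jα z) = 0 := fun z => by rw [h z]; ring
    have hb : ∀ z, ωβ z - ωγ (Jα z) = 0 := fun z => by
      have := h (Jα z)
      rw [hαα z, map_neg] at this
      linarith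
    constructor <;> simp [ha, hb]

theorem stmt16
    (n : ℕ) (hn : 1 ≤ n)
    (V : Type) [AddCommGroup V] [Module ℝ V] [FiniteDimensional ℝ V]
    (hdim : Module.finrank ℝ V = 4 * n)
    (J1 J2 J3 : V →ₗ[ℝ] V)
    (hJ1 : ∀ x, J1 (J1 x) = -x) (hJ2 : ∀ x, J2 (J2 x) = -x) (hJ3 : ∀ x, J3 (J3 x) = -x)
    (h123 : ∀ x, J1 x = J2 (J3 x)) (h132 : ∀ x, J1 x = -J3 (J2 x))
    (h231 : ∀ x, J2 x = J3 (J1 x)) (h213 : ∀ x, J2 x = -J1 (J3 x))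
    (h312 : ∀ x, J3 x = J1 (J2 x)) (h321 : ∀ x, J3 x = -J2 (J1 x))
    (ω1 ω2 ω3 : V →ₗ[ℝ] ℝ)
    :
    ((∀ x y, (-(ω3 x + ω2 (J1 x)) • J3 y - (ω2 x - ω3 (J1 x)) • J2 y + (ω3 y + ω2 (J1 y)) • J3 x + (ω2 y - ω3 (J1 y)) • J2 x) = 0 ∧ (-(ω3 x + ω2 (J1 x)) • J3 y - (ω2 x - ω3 (J1 x)) • J2 y - (ω3 y + ω2 (J1 y)) • J3 x - (ω2 y - ω3 (J1 y)) • J2 x) = 0) ↔ (∀ x, ω3 x = -ω2 (J1 x))) ∧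
    ((∀ x y, (-(ω1 x + ω3 (J2 x)) • J1 y - (ω3 x - ω1 (J2 x)) • J3 y + (ω1 y + ω3 (J2 y)) • J1 x + (ω3 y - ω1 (J2 y)) • J3 x) = 0 ∧ (-(ω1 x + ω3 (J2 x)) • J1 y - (ω3 x - ω1 (J2 x)) • J3 y - (ω1 y + ω3 (J2 y)) • J1 x - (ω3 y - ω1 (J2 y)) • J3 x) = 0) ↔ (∀ x, ω1 x = -ω3 (J2 x))) ∧
    ((∀ x y, (-(ω2 x + ω1 (J3 x)) • J2 y - (ω1 x - ω2 (J3 x)) • J1 y + (ω2 y + ω1 (J3 y)) • J2 x + (ω1 y - ω2 (J3 y)) • J1 x) = 0 ∧ (-(ω2 x + ω1 (J3 x)) • J2 y - (ω1 x - ω2 (J3 x)) • J1 y - (ω2 y + ω1 (J3 y)) • J2 x - (ω1 y - ω2 (J3 y)) • J1 x) = 0) ↔ (∀ x, ω2 x = -ω1 (J3 x))) := by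
  have hpos : 0 < Module.finrank ℝ V := by rw [hdim]; omega
  have : Nontrivial V := Module.nontrivial_of_finrank_pos hpos
  have hx0 : ∃ x : V, x ≠ 0 := exists_ne 0
  refine ⟨?_, ?_, ?_⟩
  · exact auxlem hx0 J1 J2 J3 hJ1 hJ3 (fun x => (h231 x).symm) (fun x => by rw [← neg_eq_iff_eq_neg.mpr (h321 x)]) ω2 ω3
  · exact auxlem hx0 J2 J3 J1 hJ2 hJ1 (fun x => (h312 x).symm) (fun x => by rw [← neg_eq_iff_eq_neg.mpr (h132 x)]) ω3 ω1
  · exact auxlem hx0 J3 J1 J2 hJ3 hJ2 (fun x => (h123 x).symm) (fun x => by rw [← neg_eq_iff_eq_neg.mpr (h213 x)]) ω1 ω2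
end

section
/- (Lemma 3.2.) For each cyclic permutation (α,β,γ) of (1,2,3) define N_α, N*_α : V×V → V by N_α(x,y) = −[ω_γ(x)+ω_β(J_αx)]·J_γy − [ω_β(x)−ω_γ(J_αx)]·J_βy + [ω_γ(y)+ω_β(J_αy)]·J_γx + [ω_β(y)−ω_γ(J_αy)]·J_βx and N*_α(x,y) = −[ω_γ(x)+ω_β(J_αx)]·J_γy − [ω_β(x)−ω_γ(J_αx)]·J_βy − [ω_γ(y)+ω_β(J_αy)]·J_γx − [ω_β(y)−ω_γ(J_αy)]·J_βx. Then N_α = 0 and N*_α = 0 for all α ∈ {1,2,3} if and only if ω_α = ω_β∘J_γ = −ω_γ∘J_β holds for every cyclic permutation (α,β,γ) of (1,2,3). -/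
/-- Auxiliary: if `J ∘ J = -id` and `a • y + b • J y = 0` with `y ≠ 0`, then `a = b = 0`. -/
lemma stmt17_aux0 {V : Type} [AddCommGroup V] [Module ℝ V]
    (J : V →ₗ[ℝ] V) (hJ : ∀ x, J (J x) = -x)
    (a b : ℝ) (y : V) (hy : y ≠ 0)
    (h : a • y + b • J y = 0) : a = 0 ∧ b = 0 := by
  have h2 : a • J y + b • J (J y) = 0 := by
    have := congrArg J h
    simpa [map_add, map_smul] using this
  rw [hJ] at h2
  have h3 : (a ^ 2 + b ^ 2) • y = a • (a • y + b • J y) - b • (a • J y + b • (-y)) := by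
    module
  rw [h, h2] at h3
  simp only [smul_zero, sub_zero] at h3
  rcases smul_eq_zero.mp h3 with hab | hy'
  · constructor <;> nlinarith
  · exact absurd hy' hy

/-- Key lemma: linear independence of `Jγ y` and `Jβ y`. -/
lemma stmt17_key {V : Type} [AddCommGroup V] [Module ℝ V]
    (J Jβ Jγ : V →ₗ[ℝ] V) (hJ : ∀ x, J (J x) = -x)
    (hJγ : ∀ x, Jγ (Jγ x) = -x)
    (hcomp : ∀ x, J x = -Jγ (Jβ x))
    (a b : ℝ) (y : V) (hy : y ≠ 0)
    (h : a • Jγ y + b • Jβ y = 0) : a = 0 ∧ b = 0 := by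
  have h2 : a • Jγ (Jγ y) + b • Jγ (Jβ y) = 0 := by
    have := congrArg Jγ h
    simpa [map_add, map_smul] using this
  rw [hJγ y] at h2
  have h3 : Jγ (Jβ y) = -J y := by rw [hcomp y, neg_neg]
  rw [h3] at h2
  have h4 : a • y + b • J y = 0 := by
    have h5 : a • y + b • J y = -(a • (-y) + b • (-J y)) := by module
    rw [h2, neg_zero] at h5
    exact h5
  exact stmt17_aux0 J hJ a b y hy h4

theorem stmt17
    (n : ℕ) (hn : 1 ≤ n)
    (V : Type) [AddCommGroup V] [Module ℝ V] [FiniteDimensional ℝ V]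
    (hdim : Module.finrank ℝ V = 4 * n)
    (J1 J2 J3 : V →ₗ[ℝ] V)
    (hJ1 : ∀ x, J1 (J1 x) = -x) (hJ2 : ∀ x, J2 (J2 x) = -x) (hJ3 : ∀ x, J3 (J3 x) = -x)
    (h123 : ∀ x, J1 x = J2 (J3 x)) (h132 : ∀ x, J1 x = -J3 (J2 x))
    (h231 : ∀ x, J2 x = J3 (J1 x)) (h213 : ∀ x, J2 x = -J1 (J3 x))
    (h312 : ∀ x, J3 x = J1 (J2 x)) (h321 : ∀ x, J3 x = -J2 (J1 x))
    (ω1 ω2 ω3 : V →ₗ[ℝ] ℝ)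
    :
    ((∀ x y, (-(ω3 x + ω2 (J1 x)) • J3 y - (ω2 x - ω3 (J1 x)) • J2 y + (ω3 y + ω2 (J1 y)) • J3 x + (ω2 y - ω3 (J1 y)) • J2 x) = 0) ∧ (∀ x y, (-(ω3 x + ω2 (J1 x)) • J3 y - (ω2 x - ω3 (J1 x)) • J2 y - (ω3 y + ω2 (J1 y)) • J3 x - (ω2 y - ω3 (J1 y)) • J2 x) = 0) ∧
     (∀ x y, (-(ω1 x + ω3 (J2 x)) • J1 y - (ω3 x - ω1 (J2 x)) • J3 y + (ω1 y + ω3 (J2 y)) • J1 x + (ω3 y - ω1 (J2 y)) • J3 x) = 0) ∧ (∀ x y, (-(ω1 x + ω3 (J2 x)) • J1 y - (ω3 x - ω1 (J2 x)) • J3 y - (ω1 y + ω3 (J2 y)) • J1 x - (ω3 y - ω1 (J2 y)) • J3 x) = 0) ∧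
     (∀ x y, (-(ω2 x + ω1 (J3 x)) • J2 y - (ω1 x - ω2 (J3 x)) • J1 y + (ω2 y + ω1 (J3 y)) • J2 x + (ω1 y - ω2 (J3 y)) • J1 x) = 0) ∧ (∀ x y, (-(ω2 x + ω1 (J3 x)) • J2 y - (ω1 x - ω2 (J3 x)) • J1 y - (ω2 y + ω1 (J3 y)) • J2 x - (ω1 y - ω2 (J3 y)) • J1 x) = 0)) ↔
    ((∀ x, ω1 x = ω2 (J3 x)) ∧ (∀ x, ω1 x = -ω3 (J2 x)) ∧
     (∀ x, ω2 x = ω3 (J1 x)) ∧ (∀ x, ω2 x = -ω1 (J3 x)) ∧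
     (∀ x, ω3 x = ω1 (J2 x)) ∧ (∀ x, ω3 x = -ω2 (J1 x))) := by
  have hpos : 0 < Module.finrank ℝ V := by omega
  have : Nontrivial V := Module.nontrivial_of_finrank_pos hpos
  obtain ⟨y0, hy0⟩ := exists_ne (0 : V)
  constructor
  · rintro ⟨hN1, hN1', hN2, hN2', hN3, hN3'⟩
    have k1 : ∀ x : V, ω3 x + ω2 (J1 x) = 0 ∧ ω2 x - ω3 (J1 x) = 0 := by
      intro x
      have h := hN1 x y0
      have h' := hN1' x y0
      have hs : (2 * (ω3 x + ω2 (J1 x))) • J3 y0 + (2 * (ω2 x - ω3 (J1 x))) • J2 y0 =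
          -((-(ω3 x + ω2 (J1 x)) • J3 y0 - (ω2 x - ω3 (J1 x)) • J2 y0 + (ω3 y0 + ω2 (J1 y0)) • J3 x + (ω2 y0 - ω3 (J1 y0)) • J2 x)
            + (-(ω3 x + ω2 (J1 x)) • J3 y0 - (ω2 x - ω3 (J1 x)) • J2 y0 - (ω3 y0 + ω2 (J1 y0)) • J3 x - (ω2 y0 - ω3 (J1 y0)) • J2 x)) := by
        module
      rw [h, h', add_zero, neg_zero] at hs
      have := stmt17_key J1 J2 J3 hJ1 hJ3 h132 _ _ y0 hy0 hs
      constructor <;> linarith [this.1, this.2]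
    have k2 : ∀ x : V, ω1 x + ω3 (J2 x) = 0 ∧ ω3 x - ω1 (J2 x) = 0 := by
      intro x
      have h := hN2 x y0
      have h' := hN2' x y0
      have hs : (2 * (ω1 x + ω3 (J2 x))) • J1 y0 + (2 * (ω3 x - ω1 (J2 x))) • J3 y0 =
          -((-(ω1 x + ω3 (J2 x)) • J1 y0 - (ω3 x - ω1 (J2 x)) • J3 y0 + (ω1 y0 + ω3 (J2 y0)) • J1 x + (ω3 y0 - ω1 (J2 y0)) • J3 x)
            + (-(ω1 x + ω3 (J2 x)) • J1 y0 - (ω3 x - ω1 (J2 x)) • J3 y0 - (ω1 y0 + ω3 (J2 y0)) • J1 x - (ω3 y0 - ω1 (J2 y0)) • J3 x)) := by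
        module
      rw [h, h', add_zero, neg_zero] at hs
      have := stmt17_key J2 J3 J1 hJ2 hJ1 h213 _ _ y0 hy0 hs
      constructor <;> linarith [this.1, this.2]
    have k3 : ∀ x : V, ω2 x + ω1 (J3 x) = 0 ∧ ω1 x - ω2 (J3 x) = 0 := by
      intro x
      have h := hN3 x y0
      have h' := hN3' x y0
      have hs : (2 * (ω2 x + ω1 (J3 x))) • J2 y0 + (2 * (ω1 x - ω2 (J3 x))) • J1 y0 =
          -((-(ω2 x + ω1 (J3 x)) • J2 y0 - (ω1 x - ω2 (J3 x)) • J1 y0 + (ω2 y0 + ω1 (J3 y0)) • J2 x + (ω1 y0 - ω2 (J3 y0)) • J1 x)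
            + (-(ω2 x + ω1 (J3 x)) • J2 y0 - (ω1 x - ω2 (J3 x)) • J1 y0 - (ω2 y0 + ω1 (J3 y0)) • J2 x - (ω1 y0 - ω2 (J3 y0)) • J1 x)) := by
        module
      rw [h, h', add_zero, neg_zero] at hs
      have := stmt17_key J3 J1 J2 hJ3 hJ2 h321 _ _ y0 hy0 hs
      constructor <;> linarith [this.1, this.2]
    refine ⟨fun x => ?_, fun x => ?_, fun x => ?_, fun x => ?_, fun x => ?_, fun x => ?_⟩
    · linarith [(k3 x).2]
    · linarith [(k2 x).1]
    · linarith [(k1 x).2]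
    · linarith [(k3 x).1]
    · linarith [(k2 x).2]
    · linarith [(k1 x).1]
  · rintro ⟨g1, g2, g3, g4, g5, g6⟩
    have e1 : ∀ x : V, ω3 x + ω2 (J1 x) = 0 := fun x => by rw [g6 x]; ring
    have e2 : ∀ x : V, ω2 x - ω3 (J1 x) = 0 := fun x => by rw [g3 x]; ring
    have e3 : ∀ x : V, ω1 x + ω3 (J2 x) = 0 := fun x => by rw [g2 x]; ring
    have e4 : ∀ x : V, ω3 x - ω1 (J2 x) = 0 := fun x => by rw [g5 x]; ring
    have e5 : ∀ x : V, ω2 x + ω1 (J3 x) = 0 := fun x => by rw [g4 x]; ring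
    have e6 : ∀ x : V, ω1 x - ω2 (J3 x) = 0 := fun x => by rw [g1 x]; ring
    refine ⟨fun x y => ?_, fun x y => ?_, fun x y => ?_, fun x y => ?_, fun x y => ?_, fun x y => ?_⟩ <;>
      simp [e1, e2, e3, e4, e5, e6]
end

section
/- (Algebraic core of Proposition 3.5.) For each cyclic permutation (α,β,γ) of (1,2,3), let F_α(x,y,z) := ω_γ(x)·g(J_βy,z) − ω_β(x)·g(J_γy,z) and θ_α(z) := −ε_β·ω_γ(J_βz) + ε_γ·ω_β(J_γz). Suppose that for α = 2 and α = 3 the class W₁⊕W₃ condition holds: 𝔖_{x,y,z} F_α(x,y,z) = (1/(2n))·𝔖_{x,y,z} { g(x,y)·θ_α(z) + g(J_αx,y)·θ_α(J_αz) } for all x,y,z ∈ V, where 𝔖_{x,y,z} denotes the cyclic sum over x,y,z. Then ω₂ = ω₃ = 0; consequently F₁ = 0, F₂(x,y,z) = ω₁(x)·g(J₃y,z), F₃(x,y,z) = −ω₁(x)·g(J₂y,z), θ₂ = ω₁∘J₃ and θ₃ = −ω₁∘J₂. -/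
lemma aux19 {V : Type} [AddCommGroup V] [Module ℝ V] [FiniteDimensional ℝ V]
    {n : ℕ} (hn : 1 ≤ n) (hdim : Module.finrank ℝ V = 4 * n)
    (J1 : V →ₗ[ℝ] V) (hJ1 : ∀ x, J1 (J1 x) = -x)
    (g : V →ₗ[ℝ] V →ₗ[ℝ] ℝ) (hgsymm : ∀ x y, g x y = g y x)
    (hgnd : ∀ x, (∀ y, g x y = 0) → x = 0)
    (hgJ1 : ∀ x y, g (J1 x) (J1 y) = g x y)
    (B : V →ₗ[ℝ] ℝ)
    (hC : ∀ x y z, B x * g (J1 y) z + B y * g (J1 z) x + B z * g (J1 x) y = 0) :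
    ∀ v, B v = 0 := by
  have h1 : ∀ x y w, B x * g y w - B y * g x w + B (J1 w) * g (J1 x) y = 0 := by
    intro x y w
    have e2 : g (J1 (J1 w)) x = -(g x w) := by
      rw [hJ1, map_neg]
      simp [hgsymm x w]
    have h := hC x y (J1 w)
    rw [hgJ1 y w, e2] at h
    linarith
  intro v
  by_contra hv
  set w0 : V := -(J1 v) with hw0
  have hk : B (J1 w0) = B v := by
    rw [hw0, map_neg, hJ1, neg_neg]
  have key : ∀ x : V, B x = 0 → g x w0 = 0 → x = 0 := by
    intro x hBx hgx
    have hJ1x : J1 x = 0 := by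
      apply hgnd
      intro y
      have h := h1 x y w0
      rw [hBx, hgx, hk] at h
      have h2 : B v * g (J1 x) y = 0 := by linarith
      exact (mul_eq_zero.mp h2).resolve_left hv
    have h3 := hJ1 x
    rw [hJ1x, map_zero] at h3
    exact neg_eq_zero.mp h3.symm
  set f : V →ₗ[ℝ] ℝ × ℝ := LinearMap.prod B (g.flip w0) with hf
  have hker : LinearMap.ker f = ⊥ := by
    rw [Submodule.eq_bot_iff]
    intro x hx
    rw [LinearMap.mem_ker, hf, LinearMap.prod_apply] at hx
    have hx1 : B x = 0 := congrArg Prod.fst hx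
    have hx2 : g x w0 = 0 := congrArg Prod.snd hx
    exact key x hx1 hx2
  have hr := LinearMap.finrank_range_add_finrank_ker f
  rw [hker, finrank_bot] at hr
  have hle : Module.finrank ℝ (LinearMap.range f) ≤ Module.finrank ℝ (ℝ × ℝ) :=
    (LinearMap.range f).finrank_le
  have h2 : Module.finrank ℝ (ℝ × ℝ) = 2 := by simp
  omega

theorem stmt19
    (n : ℕ) (hn : 1 ≤ n)
    (V : Type) [AddCommGroup V] [Module ℝ V] [FiniteDimensional ℝ V]
    (hdim : Module.finrank ℝ V = 4 * n)
    (J1 J2 J3 : V →ₗ[ℝ] V)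
    (hJ1 : ∀ x, J1 (J1 x) = -x) (hJ2 : ∀ x, J2 (J2 x) = -x) (hJ3 : ∀ x, J3 (J3 x) = -x)
    (h123 : ∀ x, J1 x = J2 (J3 x)) (h132 : ∀ x, J1 x = -J3 (J2 x))
    (h231 : ∀ x, J2 x = J3 (J1 x)) (h213 : ∀ x, J2 x = -J1 (J3 x))
    (h312 : ∀ x, J3 x = J1 (J2 x)) (h321 : ∀ x, J3 x = -J2 (J1 x))
    (g : V →ₗ[ℝ] V →ₗ[ℝ] ℝ)
    (hgsymm : ∀ x y, g x y = g y x)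
    (hgnd : ∀ x, (∀ y, g x y = 0) → x = 0)
    (hgJ1 : ∀ x y, g (J1 x) (J1 y) = g x y)
    (hgJ2 : ∀ x y, g (J2 x) (J2 y) = -g x y)
    (hgJ3 : ∀ x y, g (J3 x) (J3 y) = -g x y)
    (ω1 ω2 ω3 : V →ₗ[ℝ] ℝ)
    (hW2 : ∀ x y z,
      ((ω1 x * g (J3 y) z - ω3 x * g (J1 y) z) +
       (ω1 y * g (J3 z) x - ω3 y * g (J1 z) x) +
       (ω1 z * g (J3 x) y - ω3 z * g (J1 x) y)) =
      (1 / (2 * (n : ℝ))) *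
        ((g x y * (ω1 (J3 z) + ω3 (J1 z)) + g (J2 x) y * (ω1 (J3 (J2 z)) + ω3 (J1 (J2 z)))) +
         (g y z * (ω1 (J3 x) + ω3 (J1 x)) + g (J2 y) z * (ω1 (J3 (J2 x)) + ω3 (J1 (J2 x)))) +
         (g z x * (ω1 (J3 y) + ω3 (J1 y)) + g (J2 z) x * (ω1 (J3 (J2 y)) + ω3 (J1 (J2 y))))))
    (hW3 : ∀ x y z,
      ((ω2 x * g (J1 y) z - ω1 x * g (J2 y) z) +
       (ω2 y * g (J1 z) x - ω1 y * g (J2 z) x) +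
       (ω2 z * g (J1 x) y - ω1 z * g (J2 x) y)) =
      (1 / (2 * (n : ℝ))) *
        ((g x y * (-ω2 (J1 z) - ω1 (J2 z)) + g (J3 x) y * (-ω2 (J1 (J3 z)) - ω1 (J2 (J3 z)))) +
         (g y z * (-ω2 (J1 x) - ω1 (J2 x)) + g (J3 y) z * (-ω2 (J1 (J3 x)) - ω1 (J2 (J3 x)))) +
         (g z x * (-ω2 (J1 y) - ω1 (J2 y)) + g (J3 z) x * (-ω2 (J1 (J3 y)) - ω1 (J2 (J3 y)))))) :
    (∀ x, ω2 x = 0) ∧ (∀ x, ω3 x = 0) ∧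
    (∀ x y z, ω3 x * g (J2 y) z - ω2 x * g (J3 y) z = 0) ∧
    (∀ x y z, ω1 x * g (J3 y) z - ω3 x * g (J1 y) z = ω1 x * g (J3 y) z) ∧
    (∀ x y z, ω2 x * g (J1 y) z - ω1 x * g (J2 y) z = -(ω1 x) * g (J2 y) z) ∧
    (∀ z, ω1 (J3 z) + ω3 (J1 z) = ω1 (J3 z)) ∧
    (∀ z, -ω2 (J1 z) - ω1 (J2 z) = -ω1 (J2 z)) := by
  -- symmetry lemmas
  have asym1 : ∀ u v, g (J1 u) v = -(g (J1 v) u) := by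
    intro u v
    have h := hgJ1 (J1 u) v
    rw [hJ1, map_neg] at h
    simp only [LinearMap.neg_apply] at h
    rw [hgsymm u (J1 v)] at h
    linarith
  have sym2 : ∀ u v, g (J2 u) v = g (J2 v) u := by
    intro u v
    have h := hgJ2 (J2 u) v
    rw [hJ2, map_neg] at h
    simp only [LinearMap.neg_apply] at h
    rw [hgsymm u (J2 v)] at h
    linarith
  have sym3 : ∀ u v, g (J3 u) v = g (J3 v) u := by
    intro u v
    have h := hgJ3 (J3 u) v
    rw [hJ3, map_neg] at h
    simp only [LinearMap.neg_apply] at h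
    rw [hgsymm u (J3 v)] at h
    linarith
  -- cyclic relation for ω3
  have hC3 : ∀ x y z, ω3 x * g (J1 y) z + ω3 y * g (J1 z) x + ω3 z * g (J1 x) y = 0 := by
    intro x y z
    have h1 := hW2 x y z
    have h2 := hW2 x z y
    linear_combination (-(1:ℝ)/2) * h1 + ((1:ℝ)/2) * h2
      + ((1:ℝ)/2) * ω1 x * sym3 y z + ((1:ℝ)/2) * ω1 y * sym3 z x + ((1:ℝ)/2) * ω1 z * sym3 x y
      + ((1:ℝ)/2) * ω3 x * asym1 z y + ((1:ℝ)/2) * ω3 y * asym1 x z + ((1:ℝ)/2) * ω3 z * asym1 y x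
      - (1/(4*(n:ℝ))) * (ω1 (J3 z) + ω3 (J1 z)) * hgsymm x y
      - (1/(4*(n:ℝ))) * (ω1 (J3 (J2 z)) + ω3 (J1 (J2 z))) * sym2 x y
      - (1/(4*(n:ℝ))) * (ω1 (J3 x) + ω3 (J1 x)) * hgsymm y z
      - (1/(4*(n:ℝ))) * (ω1 (J3 (J2 x)) + ω3 (J1 (J2 x))) * sym2 y z
      - (1/(4*(n:ℝ))) * (ω1 (J3 y) + ω3 (J1 y)) * hgsymm z x
      - (1/(4*(n:ℝ))) * (ω1 (J3 (J2 y)) + ω3 (J1 (J2 y))) * sym2 z x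
  -- cyclic relation for ω2
  have hC2 : ∀ x y z, ω2 x * g (J1 y) z + ω2 y * g (J1 z) x + ω2 z * g (J1 x) y = 0 := by
    intro x y z
    have h1 := hW3 x y z
    have h2 := hW3 x z y
    linear_combination ((1:ℝ)/2) * h1 - ((1:ℝ)/2) * h2
      + ((1:ℝ)/2) * ω1 x * sym2 y z + ((1:ℝ)/2) * ω1 y * sym2 z x + ((1:ℝ)/2) * ω1 z * sym2 x y
      + ((1:ℝ)/2) * ω2 x * asym1 z y + ((1:ℝ)/2) * ω2 y * asym1 x z + ((1:ℝ)/2) * ω2 z * asym1 y x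
      + (1/(4*(n:ℝ))) * (-ω2 (J1 z) - ω1 (J2 z)) * hgsymm x y
      + (1/(4*(n:ℝ))) * (-ω2 (J1 (J3 z)) - ω1 (J2 (J3 z))) * sym3 x y
      + (1/(4*(n:ℝ))) * (-ω2 (J1 x) - ω1 (J2 x)) * hgsymm y z
      + (1/(4*(n:ℝ))) * (-ω2 (J1 (J3 x)) - ω1 (J2 (J3 x))) * sym3 y z
      + (1/(4*(n:ℝ))) * (-ω2 (J1 y) - ω1 (J2 y)) * hgsymm z x
      + (1/(4*(n:ℝ))) * (-ω2 (J1 (J3 y)) - ω1 (J2 (J3 y))) * sym3 z x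
  have hω3 : ∀ v, ω3 v = 0 := aux19 hn hdim J1 hJ1 g hgsymm hgnd hgJ1 ω3 hC3
  have hω2 : ∀ v, ω2 v = 0 := aux19 hn hdim J1 hJ1 g hgsymm hgnd hgJ1 ω2 hC2
  refine ⟨hω2, hω3, ?_, ?_, ?_, ?_, ?_⟩
  · intro x y z; rw [hω3 x, hω2 x]; ring
  · intro x y z; rw [hω3 x]; ring
  · intro x y z; rw [hω2 x]; ring
  · intro z; rw [hω3 (J1 z)]; ring
  · intro z; rw [hω2 (J1 z)]; ring
end
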